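/- If θ^κ/D > 2^(2^θ) (where θ^κ/D denotes the cardinality of the ultrapower of θ by D), then the ultrafilter D on κ is not separative. -/

import Mathlib

open Cardinal

universe u

private lemma nat_sq_le_two_pow : ∀ n : ℕ, 4 ≤ n → n * n ≤ 2 ^ n := by
  intro n hn
  induction n with
  | zero => omega
  | succ m ih =>
    rcases Nat.lt_or_ge m 4 with hm | hm
    · interval_cases m <;> simp_all <;> omega
    · have h1 := ih hm
      have h2 : 2 * m + 1 ≤ m * m := by nlinarith
      have : (m + 1) * (m + 1) = m * m + (2 * m + 1) := by ring
      rw [this, pow_succ]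
      omega

private lemma nat_pow_le (n m : ℕ) (h : m ≤ n) : n ^ m ≤ 2 ^ 2 ^ n := by
  rcases Nat.lt_or_ge n 4 with hn | hn
  · interval_cases n <;> interval_cases m <;> decide
  · calc n ^ m ≤ n ^ n := Nat.pow_le_pow_right (by omega) h
      _ ≤ (2 ^ n) ^ n := Nat.pow_le_pow_left (Nat.le_of_lt (Nat.lt_two_pow_self (n := n))) n
      _ = 2 ^ (n * n) := by rw [← pow_mul]
      _ ≤ 2 ^ 2 ^ n := Nat.pow_le_pow_right (by omega) (nat_sq_le_two_pow n hn)

/-- Conclusion 6.11(1): if `θ^κ/D > 2^(2^θ)` then `D` is not separative. -/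
theorem stmt_14 (κ : Type u) (D : Ultrafilter κ) (θ : Cardinal.{u})
    (h : (2 : Cardinal.{u}) ^ ((2 : Cardinal.{u}) ^ θ) < #(Filter.Germ (D : Filter κ) θ.ord.ToType)) :
    ¬∀ a b : κ → κ, (∀ i, a i ≠ b i) →
      ∃ A ∈ D, (a '' A) ∩ (b '' A) = ∅ := by
  intro H
  set T := θ.ord.ToType with hTdef
  have hT : #T = θ := mk_ord_toType θ
  rcases le_total θ #κ with hθκ | hκθ
  · -- main case : θ ≤ #κ
    -- get an injection T ↪ κ
    obtain ⟨ι⟩ : Nonempty (T ↪ κ) := by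
      rw [← hT] at hθκ
      exact Cardinal.le_def T κ |>.mp hθκ
    -- the map to ultrafilters on T
    have resp : ∀ f g : κ → T, f =ᶠ[(D : Filter κ)] g →
        Ultrafilter.map f D = Ultrafilter.map g D := by
      intro f g hfg
      apply Ultrafilter.coe_injective
      simpa [Ultrafilter.coe_map] using Filter.map_congr hfg
    let Ψ : Filter.Germ (D : Filter κ) T → Ultrafilter T :=
      Quotient.lift (fun f : κ → T => Ultrafilter.map f D) resp
    -- cardinality bound on ultrafilters
    have hcard : #(Ultrafilter T) ≤ (2 : Cardinal.{u}) ^ ((2 : Cardinal.{u}) ^ θ) := by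
      have hinj : Function.Injective (fun U : Ultrafilter T => {s : Set T | s ∈ U}) := by
        intro U V hUV
        ext s
        exact (Set.ext_iff.mp hUV s)
      calc #(Ultrafilter T) ≤ #(Set (Set T)) := mk_le_of_injective hinj
        _ = (2 : Cardinal.{u}) ^ ((2 : Cardinal.{u}) ^ θ) := by
            rw [mk_set, mk_set, hT]
    have hΨ : ¬ Function.Injective Ψ := by
      intro hinj
      exact absurd h (not_lt.mpr ((mk_le_of_injective hinj).trans hcard))
    obtain ⟨x, y, hxy, hne⟩ := Function.not_injective_iff.mp hΨ
    obtain ⟨f, rfl⟩ := Quotient.exists_rep x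
    obtain ⟨g, rfl⟩ := Quotient.exists_rep y
    have hxy' : Ultrafilter.map f D = Ultrafilter.map g D := hxy
    have hne' : ¬ f =ᶠ[(D : Filter κ)] g := fun hc => hne (Quotient.sound hc)
    have hS : {i | f i ≠ g i} ∈ D := by
      have hfreq : ∃ᶠ i in (D : Filter κ), f i ≠ g i := Filter.not_eventually.mp hne'
      exact hfreq.eventually
    obtain ⟨i₀, hi₀⟩ := D.nonempty_of_mem hS
    have hfg₀ : f i₀ ≠ g i₀ := hi₀
    -- build functions into κ
    set a : κ → κ := fun i => ι (f i) with ha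
    set b : κ → κ := fun i =>
      if f i = g i then (if f i = f i₀ then ι (g i₀) else ι (f i₀)) else ι (g i) with hb
    have hab : ∀ i, a i ≠ b i := by
      intro i
      show ι (f i) ≠ if f i = g i then (if f i = f i₀ then ι (g i₀) else ι (f i₀)) else ι (g i)
      by_cases hfg : f i = g i
      · rw [if_pos hfg]
        by_cases hfi : f i = f i₀
        · rw [if_pos hfi]
          exact fun hc => hfg₀ (hfi ▸ ι.injective hc)
        · rw [if_neg hfi]
          exact fun hc => hfi (ι.injective hc)
      · rw [if_neg hfg]
        exact fun hc => hfg (ι.injective hc)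
    obtain ⟨A, hA, hdisj⟩ := H a b hab
    set B := A ∩ {i | f i ≠ g i} with hBdef
    have hB : B ∈ D := Filter.inter_mem hA hS
    have hfB : f '' B ∈ Ultrafilter.map f D := by
      rw [Ultrafilter.mem_map]
      exact Filter.mem_of_superset hB (Set.subset_preimage_image f B)
    rw [hxy'] at hfB
    rw [Ultrafilter.mem_map] at hfB
    obtain ⟨j, hj⟩ := D.nonempty_of_mem (Filter.inter_mem hB hfB)
    obtain ⟨hjB, hjg⟩ := hj
    obtain ⟨k, hkB, hkf⟩ := hjg
    -- ι (g j) ∈ a '' A ∩ b '' A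
    have h1 : ι (g j) ∈ a '' A := ⟨k, hkB.1, by show ι (f k) = ι (g j); rw [hkf]⟩
    have hbj : b j = ι (g j) := if_neg hjB.2
    have h2 : ι (g j) ∈ b '' A := ⟨j, hjB.1, hbj⟩
    have : ι (g j) ∈ a '' A ∩ b '' A := ⟨h1, h2⟩
    rw [hdisj] at this
    exact this
  · -- degenerate case : #κ ≤ θ, cardinality contradiction
    have b1 : #(Filter.Germ (D : Filter κ) T) ≤ #(κ → T) := mk_quotient_le
    have b2 : #(κ → T) = θ ^ #κ := by
      rw [mk_arrow, hT, Cardinal.lift_id, Cardinal.lift_id]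
    have b3 : θ ^ #κ ≤ (2 : Cardinal.{u}) ^ ((2 : Cardinal.{u}) ^ θ) := by
      rcases le_or_gt ℵ₀ θ with hθ | hθ
      · have hθ0 : θ ≠ 0 := (aleph0_pos.trans_le hθ).ne'
        calc θ ^ #κ ≤ θ ^ θ := power_le_power_left hθ0 hκθ
          _ = 2 ^ θ := power_self_eq hθ
          _ ≤ (2 : Cardinal.{u}) ^ ((2 : Cardinal.{u}) ^ θ) :=
              power_le_power_left two_ne_zero (cantor θ).le
      · obtain ⟨n, rfl⟩ := Cardinal.lt_aleph0.mp hθ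
        obtain ⟨m, hm⟩ := Cardinal.lt_aleph0.mp (hκθ.trans_lt hθ)
        rw [hm]
        have hmn : m ≤ n := by
          rw [hm] at hκθ
          exact_mod_cast hκθ
        have e1 : (n : Cardinal.{u}) ^ (m : Cardinal.{u}) = ((n ^ m : ℕ) : Cardinal.{u}) := by
          rw [Cardinal.power_natCast, Nat.cast_pow]
        have e2 : (2 : Cardinal.{u}) ^ ((2 : Cardinal.{u}) ^ (n : Cardinal.{u})) =
            ((2 ^ 2 ^ n : ℕ) : Cardinal.{u}) := by
          have h2c : ((2 : ℕ) : Cardinal.{u}) = 2 := by norm_num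
          rw [← h2c, Cardinal.power_natCast, ← Nat.cast_pow, Cardinal.power_natCast,
            ← Nat.cast_pow]
        rw [e1, e2]
        exact_mod_cast nat_pow_le n m hmn
    exact absurd h (not_lt.mpr (b1.trans (b2 ▸ b3)))
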